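/- Suppose for every n ∈ ℕ there is a unique continuous y_{0,n} on I_n = [a, a+n] satisfying the fixed-point equation y_{0,n}(x) = c(ψ(x)−ψ(a))^{γ−1}/Γ(γ) + I_{a+}^{α;ψ} f(·, y_{0,n}(·), ∫_a^· K(·,τ,y_{0,n}(τ), y_{0,n}(δ(τ))) dτ)(x) together with the bound |y(x) − y_{0,n}(x)| ≤ ξσ(x)/(1 − M(ξ+Lξ²)) on I_n. Then the glued function y₀(x) = y_{0,n(x)}(x) (with n(x) = min{n : x ∈ I_n}) satisfies the same fixed-point equation and the same bound for all x ∈ [a,∞), and y₀ is the unique bounded continuous function with these properties. -/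

import Mathlib

open MeasureTheory intervalIntegral Set

/-- The ψ-Riemann–Liouville fractional integral of order α (complex-valued). -/
noncomputable def psiFracIntC (α a : ℝ) (ψ : ℝ → ℝ) (f : ℝ → ℂ) (x : ℝ) : ℂ :=
  (Real.Gamma α)⁻¹ • ∫ s in a..x, (deriv ψ s * (ψ x - ψ s) ^ (α - 1)) • f s

/-- The integral operator `T` associated with the fractional integro-differential
equation `ᴴD^{α,β;ψ}_{a+} y = f(x, y(x), ∫_a^x K(x,τ,y(τ),y(δ(τ))) dτ)`,
`I^{1-γ;ψ}_{a+} y(a) = c`. -/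
noncomputable def Tmap (α γ a : ℝ) (ψ : ℝ → ℝ) (c : ℂ) (f : ℝ → ℂ → ℂ → ℂ)
    (K : ℝ → ℝ → ℂ → ℂ → ℂ) (δ : ℝ → ℝ) (u : ℝ → ℂ) (x : ℝ) : ℂ :=
  (((ψ x - ψ a) ^ (γ - 1) / Real.Gamma γ : ℝ) : ℂ) * c +
    psiFracIntC α a ψ (fun s => f s (u s) (∫ τ in a..s, K s τ (u τ) (u (δ τ)))) x

/-- The Bielecki-type distance relative to the weight `σ` on `[a,b]`. -/
noncomputable def biel (a b : ℝ) (σ : ℝ → ℝ) (u v : ℝ → ℂ) : ℝ :=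
  ⨆ x : Set.Icc a b, ‖u x - v x‖ / σ x


lemma Tmap_congr_aux (α γ a : ℝ) (ψ : ℝ → ℝ) (c : ℂ) (f : ℝ → ℂ → ℂ → ℂ)
    (K : ℝ → ℝ → ℂ → ℂ → ℂ) (δ : ℝ → ℝ)
    (hδmap : ∀ t ∈ Set.Ici a, a ≤ δ t) (hδ : ∀ t ∈ Set.Ici a, δ t ≤ t)
    (u v : ℝ → ℂ) (x : ℝ) (hax : a ≤ x)
    (huv : ∀ t ∈ Set.Icc a x, u t = v t) :
    Tmap α γ a ψ c f K δ u x = Tmap α γ a ψ c f K δ v x := by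
  unfold Tmap psiFracIntC
  have : (∫ s in a..x, (deriv ψ s * (ψ x - ψ s) ^ (α - 1)) •
        f s (u s) (∫ τ in a..s, K s τ (u τ) (u (δ τ))))
      = ∫ s in a..x, (deriv ψ s * (ψ x - ψ s) ^ (α - 1)) •
        f s (v s) (∫ τ in a..s, K s τ (v τ) (v (δ τ))) := by
    apply intervalIntegral.integral_congr
    intro s hs
    rw [Set.uIcc_of_le hax] at hs
    have hinner : (∫ τ in a..s, K s τ (u τ) (u (δ τ)))
        = ∫ τ in a..s, K s τ (v τ) (v (δ τ)) := by
      apply intervalIntegral.integral_congr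
      intro τ hτ
      rw [Set.uIcc_of_le hs.1] at hτ
      have hτx : τ ∈ Set.Icc a x := ⟨hτ.1, hτ.2.trans hs.2⟩
      have hδτ : δ τ ∈ Set.Icc a x := ⟨hδmap τ hτ.1, (hδ τ hτ.1).trans hτx.2⟩
      simp only [huv τ hτx, huv _ hδτ]
    simp only [huv s hs, hinner]
  rw [this]

theorem ulam_hyers_rassias_infinite_interval
    (a α γ ξ M L ε ω : ℝ) (c : ℂ)
    (hα : 0 < α) (hα1 : α < 1) (hγ0 : 0 < γ) (hγ1 : γ < 1)
    (ψ : ℝ → ℝ) (hψ : Differentiable ℝ ψ) (hψ' : ∀ x, 0 < deriv ψ x)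
    (hψc : Continuous (deriv ψ))
    (hε : 0 < ε) (hεω : ε < ω)
    (σ : ℝ → ℝ) (hσc : ContinuousOn σ (Set.Ici a))
    (hσrange : ∀ x ∈ Set.Ici a, σ x ∈ Set.Ioo ε ω)
    (hσmono : MonotoneOn σ (Set.Ici a))
    (hξ0 : 0 ≤ ξ) (hξ1 : ξ < 1)
    (hξ : ∀ x ∈ Set.Ici a,
      (Real.Gamma α)⁻¹ * ∫ τ in a..x, deriv ψ τ * (ψ x - ψ τ) ^ (α - 1) * σ τ
        ≤ ξ * σ x)
    (f : ℝ → ℂ → ℂ → ℂ) (hfc : Continuous fun p : ℝ × ℂ × ℂ => f p.1 p.2.1 p.2.2)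
    (hM : 0 < M)
    (hfLip : ∀ x ∈ Set.Ici a, ∀ u v g h : ℂ,
      ‖f x u g - f x v h‖ ≤ M * (‖u - v‖ + ‖g - h‖))
    (K : ℝ → ℝ → ℂ → ℂ → ℂ)
    (hKc : Continuous fun p : ℝ × ℝ × ℂ × ℂ => K p.1 p.2.1 p.2.2.1 p.2.2.2)
    (hL : 0 < L)
    (hKLip : ∀ x ∈ Set.Ici a, ∀ τ ∈ Set.Ici a, ∀ u v w z : ℂ,
      ‖K x τ u w - K x τ v z‖ ≤ L * ‖w - z‖)
    (δ : ℝ → ℝ) (hδc : Continuous δ) (hδmap : ∀ t ∈ Set.Ici a, δ t ∈ Set.Ici a)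
    (hδ : ∀ t ∈ Set.Ici a, δ t ≤ t)
    (hcontr : M * (ξ + L * ξ ^ 2) < 1)
    (y : ℝ → ℂ) (hy : ContinuousOn y (Set.Ici a))
    (hyb : ∃ C : ℝ, ∀ x ∈ Set.Ici a, ‖y x‖ ≤ C)
    -- the family of solutions on the compact intervals `I_n = [a, a+n]`:
    (y0n : ℕ → ℝ → ℂ)
    (h0cont : ∀ n : ℕ, ContinuousOn (y0n n) (Set.Icc a (a + n)))
    (h0fix : ∀ n : ℕ, ∀ x ∈ Set.Icc a (a + n),
      y0n n x = Tmap α γ a ψ c f K δ (y0n n) x)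
    (h0bound : ∀ n : ℕ, ∀ x ∈ Set.Icc a (a + n),
      ‖y x - y0n n x‖ ≤ ξ * σ x / (1 - M * (ξ + L * ξ ^ 2)))
    -- uniqueness of the solution on each `I_n`:
    (h0uniq : ∀ n : ℕ, ∀ z : ℝ → ℂ, ContinuousOn z (Set.Icc a (a + n)) →
      (∀ x ∈ Set.Icc a (a + n), z x = Tmap α γ a ψ c f K δ z x) →
      (∀ x ∈ Set.Icc a (a + n),
        ‖y x - z x‖ ≤ ξ * σ x / (1 - M * (ξ + L * ξ ^ 2))) →
      ∀ x ∈ Set.Icc a (a + n), z x = y0n n x) :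
    ∃ y₀ : ℝ → ℂ,
      (∀ n : ℕ, ∀ x ∈ Set.Icc a (a + n), y₀ x = y0n n x) ∧
      ContinuousOn y₀ (Set.Ici a) ∧
      (∃ C : ℝ, ∀ x ∈ Set.Ici a, ‖y₀ x‖ ≤ C) ∧
      (∀ x ∈ Set.Ici a, y₀ x = Tmap α γ a ψ c f K δ y₀ x) ∧
      (∀ x ∈ Set.Ici a,
        ‖y x - y₀ x‖ ≤ ξ * σ x / (1 - M * (ξ + L * ξ ^ 2))) ∧
      (∀ y₁ : ℝ → ℂ, ContinuousOn y₁ (Set.Ici a) →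
        (∃ C : ℝ, ∀ x ∈ Set.Ici a, ‖y₁ x‖ ≤ C) →
        (∀ x ∈ Set.Ici a, y₁ x = Tmap α γ a ψ c f K δ y₁ x) →
        (∀ x ∈ Set.Ici a,
          ‖y x - y₁ x‖ ≤ ξ * σ x / (1 - M * (ξ + L * ξ ^ 2))) →
        ∀ x ∈ Set.Ici a, y₁ x = y₀ x) := by

  -- consistency of the family
  have hcons : ∀ m n : ℕ, m ≤ n → ∀ x ∈ Set.Icc a (a + (m:ℝ)), y0n n x = y0n m x := by
    intro m n hmn x hx
    have hsub : Set.Icc a (a + (m:ℝ)) ⊆ Set.Icc a (a + (n:ℝ)) := by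
      apply Set.Icc_subset_Icc_right
      have : (m:ℝ) ≤ n := Nat.cast_le.mpr hmn
      linarith
    exact h0uniq m (y0n n) ((h0cont n).mono hsub)
      (fun t ht => h0fix n t (hsub ht))
      (fun t ht => h0bound n t (hsub ht)) x hx
  set y₀ : ℝ → ℂ := fun x => y0n ⌈x - a⌉₊ x with hy₀def
  have key : ∀ n : ℕ, ∀ x ∈ Set.Icc a (a + (n:ℝ)), y₀ x = y0n n x := by
    intro n x hx
    have hmn : ⌈x - a⌉₊ ≤ n := Nat.ceil_le.mpr (by linarith [hx.2])
    have hxm : x ∈ Set.Icc a (a + (⌈x - a⌉₊ : ℝ)) :=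
      ⟨hx.1, by linarith [Nat.le_ceil (x - a)]⟩
    exact (hcons _ n hmn x hxm).symm
  have hδmap' : ∀ t ∈ Set.Ici a, a ≤ δ t := fun t ht => hδmap t ht
  have memIcc : ∀ x ∈ Set.Ici a, x ∈ Set.Icc a (a + (⌈x - a⌉₊ : ℝ)) := by
    intro x hx
    exact ⟨hx, by linarith [Nat.le_ceil (x - a)]⟩
  refine ⟨y₀, key, ?_, ?_, ?_, ?_, ?_⟩
  · -- continuity
    intro x hx
    set n : ℕ := ⌈x - a⌉₊ + 1 with hn
    have hxn : x < a + (n:ℕ) := by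
      rw [hn]; push_cast
      have := Nat.le_ceil (x - a)
      linarith
    have hmem : Set.Icc a (a + (n:ℝ)) ∈ nhdsWithin x (Set.Ici a) := by
      apply Filter.mem_of_superset
        (Filter.inter_mem self_mem_nhdsWithin
          (mem_nhdsWithin_of_mem_nhds (Iio_mem_nhds hxn)))
      rintro t ⟨ht1, ht2⟩
      exact ⟨ht1, le_of_lt ht2⟩
    have cw : ContinuousWithinAt (y0n n) (Set.Ici a) x :=
      ((h0cont n) x ⟨hx, hxn.le⟩).mono_of_mem_nhdsWithin hmem
    exact cw.congr_of_eventuallyEq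
      (Filter.eventuallyEq_of_mem hmem (fun t ht => key n t ht))
      (key n x ⟨hx, hxn.le⟩)
  · -- boundedness
    obtain ⟨C, hC⟩ := hyb
    refine ⟨C + ξ * ω / (1 - M * (ξ + L * ξ ^ 2)), fun x hx => ?_⟩
    have h1 : ‖y x - y₀ x‖ ≤ ξ * σ x / (1 - M * (ξ + L * ξ ^ 2)) := by
      rw [key _ x (memIcc x hx)]
      exact h0bound _ x (memIcc x hx)
    have hden : 0 < 1 - M * (ξ + L * ξ ^ 2) := by linarith
    have hσω : σ x ≤ ω := (hσrange x hx).2.le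
    have h2 : ξ * σ x / (1 - M * (ξ + L * ξ ^ 2))
        ≤ ξ * ω / (1 - M * (ξ + L * ξ ^ 2)) := by
      gcongr
    calc ‖y₀ x‖ = ‖y x - (y x - y₀ x)‖ := by ring_nf
      _ ≤ ‖y x‖ + ‖y x - y₀ x‖ := norm_sub_le _ _
      _ ≤ C + ξ * ω / (1 - M * (ξ + L * ξ ^ 2)) := by
          exact add_le_add (hC x hx) (h1.trans h2)
  · -- fixed point
    intro x hx
    have hxm := memIcc x hx
    set n : ℕ := ⌈x - a⌉₊
    have : y₀ x = Tmap α γ a ψ c f K δ (y0n n) x := by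
      rw [key n x hxm]
      exact h0fix n x hxm
    rw [this]
    apply Tmap_congr_aux α γ a ψ c f K δ hδmap' hδ _ _ x hx
    intro t ht
    exact (key n t ⟨ht.1, ht.2.trans hxm.2⟩).symm
  · -- the bound
    intro x hx
    rw [key _ x (memIcc x hx)]
    exact h0bound _ x (memIcc x hx)
  · -- uniqueness
    intro y₁ hy₁c _ hy₁fix hy₁bd x hx
    have hxm := memIcc x hx
    rw [key _ x hxm]
    exact h0uniq _ y₁ (hy₁c.mono (Set.Icc_subset_Ici_self))
      (fun t ht => hy₁fix t ht.1) (fun t ht => hy₁bd t ht.1) x hxm
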